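/- Let f: ℝⁿ → ℝ be continuously differentiable and let {x^k} be generated by x^{k+1} = x^k + t_k d^k with t_k ≥ 0, where ∑_{k=1}^∞ t_k ‖d^k‖² < ∞ and {t_k} is bounded from above. If {x^k} has an isolated accumulation point x̄ (i.e., x̄ is an accumulation point and there exists a neighborhood of x̄ containing no other accumulation point of {x^k}), then the whole sequence {x^k} converges to x̄. -/

import Mathlib

open Filter

/-- Theorem 3.3(ii): if `x^{k+1} = x^k + t_k d^k`, `∑ t_k ‖d^k‖² < ∞`, `{t_k}` is bounded
above, and `{x^k}` has an isolated accumulation point `xbar`, then the whole sequence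
converges to `xbar`. -/
theorem stmt4 {n : ℕ} (f : EuclideanSpace ℝ (Fin n) → ℝ) (hf : ContDiff ℝ 1 f)
    (x d : ℕ → EuclideanSpace ℝ (Fin n)) (t : ℕ → ℝ)
    (ht : ∀ k, 0 ≤ t k)
    (hstep : ∀ k, x (k + 1) = x k + t k • d k)
    (hsum : Summable (fun k => t k * ‖d k‖ ^ 2))
    (T : ℝ) (hT : ∀ k, t k ≤ T)
    (xbar : EuclideanSpace ℝ (Fin n))
    (hacc : ∃ φ : ℕ → ℕ, StrictMono φ ∧ Tendsto (x ∘ φ) atTop (nhds xbar))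
    (hiso : ∃ ε > (0 : ℝ), ∀ y ∈ Metric.ball xbar ε,
      (∃ φ : ℕ → ℕ, StrictMono φ ∧ Tendsto (x ∘ φ) atTop (nhds y)) → y = xbar) :
    Tendsto x atTop (nhds xbar) := by
  -- Step sizes tend to zero
  have hu : Tendsto (fun k => t k * ‖d k‖ ^ 2) atTop (nhds 0) := hsum.tendsto_atTop_zero
  have hstep0 : Tendsto (fun k => dist (x (k+1)) (x k)) atTop (nhds 0) := by
    have h1 : Tendsto (fun k => Real.sqrt (T * (t k * ‖d k‖ ^ 2))) atTop (nhds 0) := by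
      have h2 : Tendsto (fun k => T * (t k * ‖d k‖ ^ 2)) atTop (nhds 0) := by
        simpa using hu.const_mul T
      have := (Real.continuous_sqrt.tendsto 0).comp h2
      simpa [Function.comp_def] using this
    refine squeeze_zero (fun k => dist_nonneg) (fun k => ?_) h1
    have hx : x (k+1) - x k = t k • d k := by rw [hstep k]; abel
    rw [dist_eq_norm, hx, norm_smul, Real.norm_eq_abs, abs_of_nonneg (ht k)]
    have h2 : (t k * ‖d k‖)^2 ≤ T * (t k * ‖d k‖ ^ 2) := by
      have heq : (t k * ‖d k‖)^2 = t k * (t k * ‖d k‖^2) := by ring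
      rw [heq]
      have : (0:ℝ) ≤ t k * ‖d k‖ ^ 2 := mul_nonneg (ht k) (sq_nonneg _)
      exact mul_le_mul_of_nonneg_right (hT k) this
    calc t k * ‖d k‖ = Real.sqrt ((t k * ‖d k‖)^2) := (Real.sqrt_sq (mul_nonneg (ht k) (norm_nonneg _))).symm
      _ ≤ _ := Real.sqrt_le_sqrt h2
  obtain ⟨φ, hφ, hlim⟩ := hacc
  obtain ⟨ε, hε, hiso⟩ := hiso
  rw [Metric.tendsto_atTop]
  intro δ0 hδ0
  set δ := min δ0 (ε/2) with hδdef
  have hδpos : 0 < δ := lt_min hδ0 (by linarith)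
  have hδε : 4*δ/3 < ε := by
    have : δ ≤ ε/2 := min_le_right _ _
    linarith
  suffices h : ∀ᶠ k in atTop, dist (x k) xbar < δ by
    obtain ⟨N, hN⟩ := eventually_atTop.mp h
    exact ⟨N, fun m hm => lt_of_lt_of_le (hN m hm) (min_le_left _ _)⟩
  by_contra hcon
  have hfreq : ∃ᶠ k in atTop, δ ≤ dist (x k) xbar := by
    have := (not_eventually.mp hcon)
    exact this.mono (fun k hk => not_lt.mp hk)
  -- close points frequently
  obtain ⟨N1, hN1⟩ := Metric.tendsto_atTop.mp hlim (δ/3) (by linarith)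
  obtain ⟨N2, hN2'⟩ := Metric.tendsto_atTop.mp hstep0 (δ/3) (by linarith)
  have hN2 : ∀ k ≥ N2, dist (x (k+1)) (x k) < δ/3 := by
    intro k hk
    have := hN2' k hk
    rwa [Real.dist_eq, sub_zero, abs_of_nonneg dist_nonneg] at this
  set A : Set (EuclideanSpace ℝ (Fin n)) :=
    {y | δ ≤ dist y xbar} ∩ Metric.closedBall xbar (4*δ/3) with hAdef
  have hAmem : ∃ᶠ k in atTop, x k ∈ A := by
    rw [frequently_atTop]
    intro M
    set a := φ (max N1 (max M N2)) with ha
    have haN1 : dist (x a) xbar < δ/3 := hN1 _ (le_max_left _ _)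
    have haM : M ≤ a := le_trans (le_trans (le_max_left _ _) (le_max_right _ _))
      (hφ.le_apply)
    have haN2 : N2 ≤ a := le_trans (le_trans (le_max_right _ _) (le_max_right _ _))
      (hφ.le_apply)
    obtain ⟨b, hb1, hb2⟩ := frequently_atTop.mp hfreq (a+1)
    have hP : ∃ k, a < k ∧ δ ≤ dist (x k) xbar := ⟨b, lt_of_lt_of_le (Nat.lt_succ_self a) hb1, hb2⟩
    set c := Nat.find hP with hc
    obtain ⟨hc1, hc2⟩ := Nat.find_spec hP
    obtain ⟨m, hm⟩ : ∃ m, c = m + 1 := ⟨c - 1, by omega⟩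
    have ham : a ≤ m := by omega
    have hmlt : dist (x m) xbar < δ := by
      rcases eq_or_lt_of_le ham with h | h
      · rw [← h]; linarith
      · have := Nat.find_min hP (show m < c by omega)
        push_neg at this
        exact lt_of_not_ge fun hle => absurd (this h) (not_lt.mpr hle)
    have hstepm : dist (x (m+1)) (x m) < δ/3 := hN2 m (le_trans haN2 ham)
    have hdc : dist (x c) xbar ≤ 4*δ/3 := by
      have := dist_triangle (x c) (x m) xbar
      rw [hm] at *
      linarith
    refine ⟨c, by omega, ?_⟩
    exact ⟨hc2, Metric.mem_closedBall.mpr hdc⟩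
  obtain ⟨ψ, hψ, hψmem⟩ := Filter.extraction_of_frequently_atTop hAmem
  have hK : IsCompact A := by
    refine (isCompact_closedBall xbar (4*δ/3)).of_isClosed_subset ?_ Set.inter_subset_right
    exact (isClosed_le continuous_const ((continuous_id.dist continuous_const))).inter
      Metric.isClosed_closedBall
  obtain ⟨y, hyA, ψ2, hψ2, hy⟩ := hK.tendsto_subseq hψmem
  have hyeq : y = xbar := by
    refine hiso y ?_ ⟨ψ ∘ ψ2, hψ.comp hψ2, hy⟩
    have : dist y xbar ≤ 4*δ/3 := Metric.mem_closedBall.mp hyA.2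
    exact Metric.mem_ball.mpr (lt_of_le_of_lt this hδε)
  have : δ ≤ dist y xbar := hyA.1
  rw [hyeq, dist_self] at this
  linarith
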